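/- arXiv:2106.08393 — 2 statements merged into one kernel-verified Lean document; each statement's English description precedes it below -/
import Mathlib

section
/- Let N and m be positive integers and let c : [N] × [m] → [−1/2, 1/2] be arbitrary. Define g : [N] → {−1/2, 1/2} greedily: for each x (in increasing order), g(x) is chosen to minimize Σ_{j=1}^m (Σ_{x'=1}^{x} g(x')·c(x',j))². Then for every j, |Σ_{x=1}^{N} g(x)·c(x,j)| ≤ √(m·N)/4. -/
/-- Core diagonalization lemma: a greedily chosen ±1/2-valued function g has
correlation at most √(m·N)/4 with each of the m columns of c. -/
theorem greedy_diagonalization (N m : ℕ) (hN : 0 < N) (hm : 0 < m)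
    (c : Fin N → Fin m → ℝ) (hc : ∀ x j, |c x j| ≤ 1 / 2)
    (g : Fin N → ℝ) (hg : ∀ x, g x = 1 / 2 ∨ g x = -(1 / 2))
    (hgreedy : ∀ x : Fin N, ∀ y : ℝ, (y = 1 / 2 ∨ y = -(1 / 2)) →
      ∑ j, (∑ x' ∈ Finset.univ.filter (· ≤ x), g x' * c x' j) ^ 2
        ≤ ∑ j, ((∑ x' ∈ Finset.univ.filter (· < x), g x' * c x' j) + y * c x j) ^ 2) :
    ∀ j, |∑ x, g x * c x j| ≤ Real.sqrt (m * N) / 4 := by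
  -- step inequality
  have hcsq : ∀ x j, (c x j) ^ 2 ≤ 1 / 4 := by
    intro x j
    have h := abs_le.mp (hc x j)
    nlinarith [h.1, h.2]
  have step : ∀ x : Fin N,
      ∑ j, (∑ x' ∈ Finset.univ.filter (· ≤ x), g x' * c x' j) ^ 2
        ≤ (∑ j, (∑ x' ∈ Finset.univ.filter (· < x), g x' * c x' j) ^ 2) + m / 16 := by
    intro x
    have h1 := hgreedy x (1 / 2) (Or.inl rfl)
    have h2 := hgreedy x (-(1 / 2)) (Or.inr rfl)
    have hsum : (∑ j, ((∑ x' ∈ Finset.univ.filter (· < x), g x' * c x' j) + (1/2) * c x j) ^ 2)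
        + (∑ j, ((∑ x' ∈ Finset.univ.filter (· < x), g x' * c x' j) + (-(1/2)) * c x j) ^ 2)
        ≤ 2 * (∑ j, (∑ x' ∈ Finset.univ.filter (· < x), g x' * c x' j) ^ 2) + m / 8 := by
      rw [← Finset.sum_add_distrib]
      have : ∀ j : Fin m, ((∑ x' ∈ Finset.univ.filter (· < x), g x' * c x' j) + (1/2) * c x j) ^ 2
          + ((∑ x' ∈ Finset.univ.filter (· < x), g x' * c x' j) + (-(1/2)) * c x j) ^ 2
          ≤ 2 * (∑ x' ∈ Finset.univ.filter (· < x), g x' * c x' j) ^ 2 + 1 / 8 := by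
        intro j
        have := hcsq x j
        nlinarith [this]
      calc ∑ j : Fin m, (((∑ x' ∈ Finset.univ.filter (· < x), g x' * c x' j) + (1/2) * c x j) ^ 2
            + ((∑ x' ∈ Finset.univ.filter (· < x), g x' * c x' j) + (-(1/2)) * c x j) ^ 2)
          ≤ ∑ j : Fin m, (2 * (∑ x' ∈ Finset.univ.filter (· < x), g x' * c x' j) ^ 2 + 1 / 8) :=
            Finset.sum_le_sum fun j _ => this j
        _ = 2 * (∑ j, (∑ x' ∈ Finset.univ.filter (· < x), g x' * c x' j) ^ 2) + m / 8 := by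
            rw [Finset.sum_add_distrib, ← Finset.mul_sum]
            simp
            ring
    linarith
  -- potential bound by induction
  have key : ∀ k : ℕ, ∀ hk : k < N,
      ∑ j, (∑ x' ∈ Finset.univ.filter (· ≤ (⟨k, hk⟩ : Fin N)), g x' * c x' j) ^ 2
        ≤ m * (k + 1) / 16 := by
    intro k
    induction k with
    | zero =>
      intro hk
      have hemp : Finset.univ.filter (· < (⟨0, hk⟩ : Fin N)) = ∅ := by
        apply Finset.filter_eq_empty_iff.mpr
        intro a _
        simp [Fin.lt_def]
      have := step ⟨0, hk⟩
      rw [hemp] at this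
      simpa using this
    | succ n ih =>
      intro hk
      have hn : n < N := Nat.lt_of_succ_lt hk
      have hfil : Finset.univ.filter (· < (⟨n + 1, hk⟩ : Fin N))
          = Finset.univ.filter (· ≤ (⟨n, hn⟩ : Fin N)) := by
        apply Finset.filter_congr
        intro a _
        simp [Fin.lt_def, Fin.le_def, Nat.lt_succ_iff]
      have := step ⟨n + 1, hk⟩
      rw [hfil] at this
      have hih := ih hn
      have : ∑ j, (∑ x' ∈ Finset.univ.filter (· ≤ (⟨n + 1, hk⟩ : Fin N)), g x' * c x' j) ^ 2
          ≤ m * (n + 1) / 16 + m / 16 := by linarith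
      calc ∑ j, (∑ x' ∈ Finset.univ.filter (· ≤ (⟨n + 1, hk⟩ : Fin N)), g x' * c x' j) ^ 2
          ≤ m * (n + 1) / 16 + m / 16 := this
        _ = m * ((n + 1 : ℕ) + 1) / 16 := by push_cast; ring
  -- apply at the last index
  have hlast : N - 1 < N := Nat.pred_lt hN.ne'
  have huniv : Finset.univ.filter (· ≤ (⟨N - 1, hlast⟩ : Fin N)) = Finset.univ := by
    apply Finset.filter_true_of_mem
    intro a _
    simp [Fin.le_def]
    omega
  have hkey := key (N - 1) hlast
  rw [huniv] at hkey
  have hNk : (↑m : ℝ) * (↑(N - 1) + 1) / 16 = m * N / 16 := by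
    have h1 : ((N - 1 : ℕ) : ℝ) + 1 = N := by
      have h2 : N - 1 + 1 = N := Nat.succ_pred_eq_of_pos hN
      exact_mod_cast congrArg (Nat.cast : ℕ → ℝ) h2
    rw [h1]
  rw [hNk] at hkey
  intro j
  have hsingle : (∑ x, g x * c x j) ^ 2 ≤ m * N / 16 := by
    refine le_trans ?_ hkey
    exact Finset.single_le_sum (f := fun i => (∑ x, g x * c x i) ^ 2)
      (fun i _ => sq_nonneg _) (Finset.mem_univ j)
  have h16 : (m : ℝ) * N / 16 = (Real.sqrt (m * N) / 4) ^ 2 := by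
    rw [div_pow, Real.sq_sqrt (by positivity)]
    norm_num
  rw [h16] at hsingle
  have hs := Real.sqrt_le_sqrt hsingle
  rwa [Real.sqrt_sq_eq_abs, Real.sqrt_sq (by positivity)] at hs
end

section
/- Let n' be a positive integer, N = 2^{n'}, and let T' be a uniformly random subset of {0,1}^{n'} of fixed size t. Fix m with t ≤ 2^{m-2}, and let H ⊆ {0,1}^m be the image of T' under a uniformly random linear hash h : {0,1}^{n'} → {0,1}^m (multiplication by a uniform m×n' matrix over 𝔽₂), with n' independent such hashes h₁,...,h_{n'} and images H₁,...,H_{n'}. Then the probability that there exists x ∉ T' with h_i(x) ∈ H_i for all i ∈ {1,...,n'} is at most 2^{n'}·(1/4)^{n'} = 2^{-n'}. -/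
open Finset

lemma row_count (n' : ℕ) (v : Fin n' → ZMod 2) (hv : v ≠ 0) :
    2 * (univ.filter fun r : Fin n' → ZMod 2 => dotProduct r v = 0).card = 2 ^ n' := by
  classical
  obtain ⟨j, hj⟩ := Function.ne_iff.mp hv
  have hvj : v j = 1 := by
    have h01 : ∀ x : ZMod 2, x ≠ 0 → x = 1 := by decide
    exact h01 _ (by simpa using hj)
  have key : ∀ r : Fin n' → ZMod 2,
      dotProduct (Function.update r j (r j + 1)) v = dotProduct r v + 1 := by
    intro r
    have hupd : Function.update r j (r j + 1) = r + Pi.single j 1 := by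
      funext k
      rcases eq_or_ne k j with rfl | hk
      · simp
      · simp [Function.update_apply, Pi.single_apply, hk]
    rw [hupd, add_dotProduct, single_dotProduct, one_mul, hvj]
  have hcard : (univ.filter fun r : Fin n' → ZMod 2 => dotProduct r v = 0).card
      = (univ.filter fun r : Fin n' → ZMod 2 => dotProduct r v = 1).card := by
    apply Finset.card_nbij' (fun r => Function.update r j (r j + 1))
      (fun r => Function.update r j (r j + 1))
    · intro r hr
      simp only [coe_filter, Set.mem_setOf_eq, mem_filter, mem_univ, true_and] at hr ⊢
      rw [key, hr]; decide
    · intro r hr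
      simp only [coe_filter, Set.mem_setOf_eq, mem_filter, mem_univ, true_and] at hr ⊢
      rw [key, hr]; decide
    · intro r _
      funext k
      rcases eq_or_ne k j with rfl | hk
      · simp only [Function.update_self]
        rw [add_assoc, show (1:ZMod 2)+1 = 0 by decide, add_zero]
      · simp [Function.update_apply, hk]
    · intro r _
      funext k
      rcases eq_or_ne k j with rfl | hk
      · simp only [Function.update_self]
        rw [add_assoc, show (1:ZMod 2)+1 = 0 by decide, add_zero]
      · simp [Function.update_apply, hk]
  have hsplit : (univ.filter fun r : Fin n' → ZMod 2 => dotProduct r v = 0).card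
      + (univ.filter fun r : Fin n' → ZMod 2 => dotProduct r v = 1).card
      = 2 ^ n' := by
    have hneg : (univ.filter fun r : Fin n' → ZMod 2 => ¬ dotProduct r v = 0)
        = (univ.filter fun r : Fin n' → ZMod 2 => dotProduct r v = 1) := by
      apply filter_congr
      intro r _
      constructor
      · intro h
        have h01 : ∀ x : ZMod 2, x ≠ 0 → x = 1 := by decide
        exact h01 _ h
      · intro h
        rw [h]
        decide
    rw [← hneg, Finset.card_filter_add_card_filter_not]
    simp [Fintype.card_fun]
  omega

lemma pi_count {ι : Type*} [Fintype ι] [DecidableEq ι] {α : ι → Type*} [∀ i, Fintype (α i)]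
    (p : ∀ i, α i → Prop) [∀ i, DecidablePred (p i)] :
    (univ.filter fun f : ∀ i, α i => ∀ i, p i (f i)).card
      = ∏ i, (univ.filter (p i)).card := by
  simp_rw [← Fintype.card_subtype]
  rw [← Fintype.card_pi]
  exact Fintype.card_congr (Equiv.subtypePiEquivPi)
lemma ker_count (m n' : ℕ) (v : Fin n' → ZMod 2) (hv : v ≠ 0) :
    (univ.filter fun B : Matrix (Fin m) (Fin n') (ZMod 2) => B.mulVec v = 0).card * 2 ^ m
      = Fintype.card (Matrix (Fin m) (Fin n') (ZMod 2)) := by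
  classical
  rw [← Fintype.card_subtype]
  have e1 : {B : Matrix (Fin m) (Fin n') (ZMod 2) // B.mulVec v = 0}
      ≃ {f : ∀ _ : Fin m, Fin n' → ZMod 2 // ∀ i, dotProduct (f i) v = 0} := by
    apply Equiv.subtypeEquivRight
    intro B
    constructor
    · intro h i
      exact congrFun h i
    · intro h
      funext i
      exact h i
  have e2 := e1.trans (Equiv.subtypePiEquivPi (p := fun _ : Fin m =>
      fun r : Fin n' → ZMod 2 => dotProduct r v = 0))
  rw [Fintype.card_congr e2, Fintype.card_pi]
  simp_rw [Fintype.card_subtype]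
  rw [Finset.prod_const, Finset.card_univ, Fintype.card_fin]
  have hrow := row_count n' v hv
  have hcardM : Fintype.card (Matrix (Fin m) (Fin n') (ZMod 2)) = (2 ^ n') ^ m := by
    rw [show Fintype.card (Matrix (Fin m) (Fin n') (ZMod 2))
        = Fintype.card (Fin m → Fin n' → ZMod 2) from Fintype.card_congr (Equiv.refl _)]
    simp [Fintype.card_fun]
  rw [hcardM, ← mul_pow]
  congr 1
  omega
lemma per_hash (n' m t : ℕ) (hm : 2 ≤ m) (ht : t ≤ 2 ^ (m - 2))
    (T' : Finset (Fin n' → ZMod 2)) (hT' : T'.card = t)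
    (x : Fin n' → ZMod 2) (hx : x ∉ T') :
    4 * (univ.filter fun B : Matrix (Fin m) (Fin n') (ZMod 2) =>
        ∃ u ∈ T', B.mulVec x = B.mulVec u).card
      ≤ Fintype.card (Matrix (Fin m) (Fin n') (ZMod 2)) := by
  classical
  set K := Fintype.card (Matrix (Fin m) (Fin n') (ZMod 2)) with hK
  rcases Nat.eq_zero_or_pos t with rfl | htpos
  · have : T' = ∅ := card_eq_zero.mp hT'
    subst this
    simp [Fintype.card_pos.le]
  -- union bound
  have hsub : (univ.filter fun B : Matrix (Fin m) (Fin n') (ZMod 2) =>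
        ∃ u ∈ T', B.mulVec x = B.mulVec u)
      ⊆ T'.biUnion (fun u => univ.filter fun B : Matrix (Fin m) (Fin n') (ZMod 2) =>
        B.mulVec (x - u) = 0) := by
    intro B hB
    simp only [mem_filter, mem_univ, true_and] at hB
    obtain ⟨u, hu, hBu⟩ := hB
    refine mem_biUnion.mpr ⟨u, hu, ?_⟩
    simp only [mem_filter, mem_univ, true_and]
    rw [Matrix.mulVec_sub, sub_eq_zero, hBu]
  have hcard : (univ.filter fun B : Matrix (Fin m) (Fin n') (ZMod 2) =>
        ∃ u ∈ T', B.mulVec x = B.mulVec u).card * 2 ^ m ≤ t * K := by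
    calc (univ.filter fun B : Matrix (Fin m) (Fin n') (ZMod 2) =>
            ∃ u ∈ T', B.mulVec x = B.mulVec u).card * 2 ^ m
        ≤ (∑ u ∈ T', (univ.filter fun B : Matrix (Fin m) (Fin n') (ZMod 2) =>
            B.mulVec (x - u) = 0).card) * 2 ^ m := by
          exact Nat.mul_le_mul_right _ ((card_le_card hsub).trans (card_biUnion_le))
      _ = ∑ u ∈ T', ((univ.filter fun B : Matrix (Fin m) (Fin n') (ZMod 2) =>
            B.mulVec (x - u) = 0).card * 2 ^ m) := by rw [Finset.sum_mul]
      _ = ∑ u ∈ T', K := by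
          apply Finset.sum_congr rfl
          intro u hu
          exact ker_count m n' (x - u) (sub_ne_zero.mpr (fun h => hx (h ▸ hu)))
      _ = t * K := by rw [Finset.sum_const, hT', smul_eq_mul]
  -- now combine with 4 * t ≤ 2 ^ m
  have h4t : 4 * t ≤ 2 ^ m := by
    have : 2 ^ m = 4 * 2 ^ (m - 2) := by
      rw [show m = 2 + (m - 2) by omega, pow_add]
      norm_num
    omega
  set c := (univ.filter fun B : Matrix (Fin m) (Fin n') (ZMod 2) =>
        ∃ u ∈ T', B.mulVec x = B.mulVec u).card
  have step : (4 * c) * t ≤ t * K := by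
    calc (4 * c) * t = c * (4 * t) := by ring
      _ ≤ c * 2 ^ m := Nat.mul_le_mul_left _ h4t
      _ ≤ t * K := hcard
  have := Nat.le_of_mul_le_mul_left (by linarith [step] : t * (4 * c) ≤ t * K) htpos
  exact this

/-- Key counting lemma: with n' independent uniform linear hashes to {0,1}^m and
|T'| ≤ 2^{m−2}, the probability that some x ∉ T' collides with T' under every
hash is at most 2^{n'}·(1/4)^{n'} = 2^{−n'}. -/
theorem all_hashes_collide_bound (n' m t : ℕ) (hn' : 0 < n') (hm : 2 ≤ m)
    (ht : t ≤ 2 ^ (m - 2)) (T' : Finset (Fin n' → ZMod 2)) (hT' : T'.card = t) :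
    ((Finset.univ.filter fun B : Fin n' → Matrix (Fin m) (Fin n') (ZMod 2) =>
        ∃ x, x ∉ T' ∧ ∀ i, ∃ u ∈ T', (B i).mulVec x = (B i).mulVec u).card : ℝ)
      / Fintype.card (Fin n' → Matrix (Fin m) (Fin n') (ZMod 2))
      ≤ 1 / 2 ^ n' := by
  classical
  set K := Fintype.card (Matrix (Fin m) (Fin n') (ZMod 2)) with hK
  have hKpos : 0 < K := Fintype.card_pos
  set fc := (Finset.univ.filter fun B : Fin n' → Matrix (Fin m) (Fin n') (ZMod 2) =>
        ∃ x, x ∉ T' ∧ ∀ i, ∃ u ∈ T', (B i).mulVec x = (B i).mulVec u).card with hfc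
  -- union bound over x
  have hsub : (Finset.univ.filter fun B : Fin n' → Matrix (Fin m) (Fin n') (ZMod 2) =>
        ∃ x, x ∉ T' ∧ ∀ i, ∃ u ∈ T', (B i).mulVec x = (B i).mulVec u)
      ⊆ (univ \ T').biUnion (fun x =>
          univ.filter fun B : Fin n' → Matrix (Fin m) (Fin n') (ZMod 2) =>
            ∀ i, ∃ u ∈ T', (B i).mulVec x = (B i).mulVec u) := by
    intro B hB
    simp only [mem_filter, mem_univ, true_and] at hB
    obtain ⟨x, hx, h⟩ := hB
    refine mem_biUnion.mpr ⟨x, mem_sdiff.mpr ⟨mem_univ _, hx⟩, ?_⟩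
    simp only [mem_filter, mem_univ, true_and]
    exact h
  have hfc_le : fc ≤ ∑ x ∈ univ \ T',
      (univ.filter fun B : Fin n' → Matrix (Fin m) (Fin n') (ZMod 2) =>
        ∀ i, ∃ u ∈ T', (B i).mulVec x = (B i).mulVec u).card :=
    (card_le_card hsub).trans card_biUnion_le
  -- per-x product structure
  have hprod : ∀ x, (univ.filter fun B : Fin n' → Matrix (Fin m) (Fin n') (ZMod 2) =>
        ∀ i, ∃ u ∈ T', (B i).mulVec x = (B i).mulVec u).card
      = ((univ.filter fun A : Matrix (Fin m) (Fin n') (ZMod 2) =>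
          ∃ u ∈ T', A.mulVec x = A.mulVec u).card) ^ n' := by
    intro x
    rw [← Fintype.card_subtype]
    rw [Fintype.card_congr (Equiv.subtypePiEquivPi
        (p := fun _ : Fin n' => fun A : Matrix (Fin m) (Fin n') (ZMod 2) =>
          ∃ u ∈ T', A.mulVec x = A.mulVec u))]
    rw [Fintype.card_pi]
    simp_rw [Fintype.card_subtype]
    rw [Finset.prod_const, Finset.card_univ, Fintype.card_fin]
  -- combine
  have hkey : 4 ^ n' * fc ≤ 2 ^ n' * K ^ n' := by
    calc 4 ^ n' * fc ≤ 4 ^ n' * ∑ x ∈ univ \ T',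
          (univ.filter fun B : Fin n' → Matrix (Fin m) (Fin n') (ZMod 2) =>
            ∀ i, ∃ u ∈ T', (B i).mulVec x = (B i).mulVec u).card :=
          Nat.mul_le_mul_left _ hfc_le
      _ = ∑ x ∈ univ \ T', 4 ^ n' *
          (univ.filter fun B : Fin n' → Matrix (Fin m) (Fin n') (ZMod 2) =>
            ∀ i, ∃ u ∈ T', (B i).mulVec x = (B i).mulVec u).card := Finset.mul_sum _ _ _
      _ ≤ ∑ _x ∈ univ \ T', K ^ n' := by
          apply Finset.sum_le_sum
          intro x hx
          rw [hprod x, ← mul_pow]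
          exact Nat.pow_le_pow_left
            (per_hash n' m t hm ht T' hT' x (mem_sdiff.mp hx).2) n'
      _ = (univ \ T').card * K ^ n' := by rw [Finset.sum_const, smul_eq_mul]
      _ ≤ 2 ^ n' * K ^ n' := by
          apply Nat.mul_le_mul_right
          calc (univ \ T').card ≤ Fintype.card (Fin n' → ZMod 2) := card_le_univ _
            _ = 2 ^ n' := by simp [Fintype.card_fun]
  have hnat : 2 ^ n' * fc ≤ K ^ n' := by
    have h4 : (4 : ℕ) ^ n' = 2 ^ n' * 2 ^ n' := by
      rw [← mul_pow]; norm_num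
    have : 2 ^ n' * (2 ^ n' * fc) ≤ 2 ^ n' * K ^ n' := by
      rw [← mul_assoc, ← h4]; exact hkey
    exact Nat.le_of_mul_le_mul_left this (Nat.pow_pos (by norm_num))
  -- conclude in ℝ
  have hfin : Fintype.card (Fin n' → Matrix (Fin m) (Fin n') (ZMod 2)) = K ^ n' := by
    rw [Fintype.card_fun, Fintype.card_fin, hK]
  rw [hfin]
  rw [div_le_div_iff₀ (by positivity) (by positivity)]
  have : (fc : ℝ) * 2 ^ n' ≤ (K : ℝ) ^ n' := by
    exact_mod_cast (by linarith [hnat] : fc * 2 ^ n' ≤ K ^ n')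
  push_cast
  linarith
end
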